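/- Let G be a subgroup of SL(2,ℂ) whose natural action on ℂ² is irreducible. Then G is unitary if and only if there exists an invertible 2×2 complex matrix T such that either (a) for every g ∈ G all entries of T⁻¹ g T are real (G is conjugate to a subgroup of SL(2,ℝ)), or (b) for every g ∈ G the matrix T⁻¹ g T lies in SU(2), i.e., (T⁻¹ g T)ᴴ (T⁻¹ g T) = 1. -/

import Mathlib

open Matrix Complex

private lemma IUmodel.swap_herm : (!![0,1;1,(0:ℂ)])ᴴ = !![0,1;1,(0:ℂ)] := by
  ext i j
  fin_cases i <;> fin_cases j <;> simp [Matrix.conjTranspose_apply]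

private lemma IUmodel.swap_conj (e : Fin 2 → ℂ) :
    !![0,1;1,(0:ℂ)] * diagonal e * !![0,1;1,(0:ℂ)] = !![e 1, 0; 0, e 0] := by
  ext i j
  fin_cases i <;> fin_cases j <;>
    simp [Matrix.mul_apply, Fin.sum_univ_two, Matrix.diagonal, Matrix.vecHead, Matrix.vecTail]

private lemma IUmodel.diag_eta (e : Fin 2 → ℂ) : diagonal e = !![e 0, 0; 0, e 1] := by
  ext i j
  fin_cases i <;> fin_cases j <;> simp [Matrix.diagonal, Matrix.vecHead, Matrix.vecTail]

/-- Congruence diagonalization of a nondegenerate 2×2 Hermitian matrix with ±1 entries. -/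
private lemma IUmodel.herm_congr_diag (H : Matrix (Fin 2) (Fin 2) ℂ)
    (hH : H.IsHermitian) (hdet : H.det ≠ 0) :
    ∃ S : Matrix (Fin 2) (Fin 2) ℂ, IsUnit S.det ∧ ∃ e : Fin 2 → ℝ,
      (∀ i, e i = 1 ∨ e i = -1) ∧ Sᴴ * H * S = diagonal (fun i => ((e i : ℝ) : ℂ)) := by
  classical
  set U : Matrix (Fin 2) (Fin 2) ℂ := (hH.eigenvectorUnitary : Matrix (Fin 2) (Fin 2) ℂ) with hU
  have hUU : Uᴴ * U = 1 := by
    have h2 := congrArg (Subtype.val) (Unitary.star_mul_self hH.eigenvectorUnitary)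
    push_cast at h2
    rwa [star_eq_conjTranspose] at h2
  have hUU' : U * Uᴴ = 1 := by
    have h2 := congrArg (Subtype.val) (Unitary.mul_star_self hH.eigenvectorUnitary)
    push_cast at h2
    rwa [star_eq_conjTranspose] at h2
  have hspec : Uᴴ * H * U = diagonal (fun i => ((hH.eigenvalues i : ℝ) : ℂ)) := by
    conv_lhs => rw [hH.spectral_theorem, Unitary.conjStarAlgAut_apply]
    rw [star_eq_conjTranspose]
    simp only [← hU, Matrix.mul_assoc]
    rw [hUU]
    simp only [← Matrix.mul_assoc, hUU]
    simp
  set lam := hH.eigenvalues with hlam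
  have hlne : ∀ i, lam i ≠ 0 := by
    intro i hi
    apply hdet
    rw [hH.det_eq_prod_eigenvalues, Fin.prod_univ_two]
    fin_cases i
    · rw [show hH.eigenvalues 0 = 0 from hi]; simp
    · rw [show hH.eigenvalues 1 = 0 from hi]; simp
  set d : Fin 2 → ℝ := fun i => (Real.sqrt |lam i|)⁻¹ with hd
  have hdpos : ∀ i, 0 < d i := by
    intro i
    have : 0 < |lam i| := abs_pos.2 (hlne i)
    positivity
  set e : Fin 2 → ℝ := fun i => lam i / |lam i| with he
  have hee : ∀ i, e i = 1 ∨ e i = -1 := by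
    intro i
    rcases lt_or_gt_of_ne (hlne i) with h | h
    · right; show lam i / |lam i| = -1
      rw [abs_of_neg h, div_neg, div_self (hlne i)]
    · left; show lam i / |lam i| = 1
      rw [abs_of_pos h, div_self (hlne i)]
  have hkey : ∀ i, (d i : ℂ) * (lam i : ℂ) * (d i : ℂ) = (e i : ℂ) := by
    intro i
    have h0 : 0 < |lam i| := abs_pos.2 (hlne i)
    have h1 : d i * lam i * d i = e i := by
      have hsne : Real.sqrt |lam i| ≠ 0 := ne_of_gt (Real.sqrt_pos.2 h0)
      show (Real.sqrt |lam i|)⁻¹ * lam i * (Real.sqrt |lam i|)⁻¹ = lam i / |lam i|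
      rw [← Real.mul_self_sqrt h0.le]
      field_simp
      rw [Real.sq_sqrt (sq_nonneg (Real.sqrt |lam i|))]
    push_cast [← h1]
    ring
  refine ⟨U * diagonal (fun i => (d i : ℂ)), ?_, e, hee, ?_⟩
  · have hud : IsUnit U.det := Matrix.isUnit_det_of_right_inverse hUU'
    have h2 : (diagonal (fun i => ((d i : ℝ) : ℂ))).det ≠ 0 := by
      rw [Matrix.det_diagonal, Fin.prod_univ_two]
      exact mul_ne_zero (by exact_mod_cast (hdpos 0).ne') (by exact_mod_cast (hdpos 1).ne')
    rw [Matrix.det_mul]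
    exact hud.mul (isUnit_iff_ne_zero.2 h2)
  · rw [Matrix.conjTranspose_mul]
    have hdiagH : (diagonal (fun i => ((d i : ℝ) : ℂ)))ᴴ = diagonal (fun i => ((d i : ℝ) : ℂ)) := by
      rw [Matrix.diagonal_conjTranspose,
        show star (fun i => ((d i : ℝ) : ℂ)) = fun i => ((d i : ℝ) : ℂ) from
          funext fun i => Complex.conj_ofReal _]
    rw [hdiagH]
    calc diagonal (fun i => ((d i : ℝ) : ℂ)) * Uᴴ * H * (U * diagonal fun i => ((d i : ℝ) : ℂ))
        = diagonal (fun i => ((d i : ℝ) : ℂ)) * (Uᴴ * H * U) * diagonal (fun i => ((d i : ℝ) : ℂ)) := by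
          simp only [Matrix.mul_assoc]
      _ = diagonal (fun i => ((e i : ℝ) : ℂ)) := by
          rw [hspec, Matrix.diagonal_mul_diagonal, Matrix.diagonal_mul_diagonal]
          exact congrArg _ (funext hkey)

/-- Congruence reduction to one of the three model forms `1`, `-1`, `diag(1,-1)`. -/
private lemma IUmodel.herm_congr_models (H : Matrix (Fin 2) (Fin 2) ℂ)
    (hH : H.IsHermitian) (hdet : H.det ≠ 0) :
    ∃ S : Matrix (Fin 2) (Fin 2) ℂ, IsUnit S.det ∧
      (Sᴴ * H * S = 1 ∨ Sᴴ * H * S = -1 ∨ Sᴴ * H * S = !![1,0;0,(-1:ℂ)]) := by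
  obtain ⟨S, hS, e, hee, hdiag⟩ := IUmodel.herm_congr_diag H hH hdet
  rcases hee 0 with h0 | h0 <;> rcases hee 1 with h1 | h1
  · refine ⟨S, hS, Or.inl ?_⟩
    rw [hdiag, IUmodel.diag_eta, h0, h1, Matrix.one_fin_two]
    norm_num
  · refine ⟨S, hS, Or.inr (Or.inr ?_)⟩
    rw [hdiag, IUmodel.diag_eta, h0, h1]
    norm_num
  · -- e = (-1, 1) : conjugate additionally by the swap matrix
    refine ⟨S * !![0,1;1,(0:ℂ)], ?_, Or.inr (Or.inr ?_)⟩
    · rw [Matrix.det_mul]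
      refine hS.mul (isUnit_iff_ne_zero.2 ?_)
      rw [Matrix.det_fin_two_of]
      norm_num
    · rw [Matrix.conjTranspose_mul, IUmodel.swap_herm]
      calc !![0,1;1,(0:ℂ)] * Sᴴ * H * (S * !![0,1;1,(0:ℂ)])
          = !![0,1;1,(0:ℂ)] * (Sᴴ * H * S) * !![0,1;1,(0:ℂ)] := by
            simp only [Matrix.mul_assoc]
        _ = !![1,0;0,(-1:ℂ)] := by
            rw [hdiag, IUmodel.swap_conj]
            norm_num [h0, h1]
  · refine ⟨S, hS, Or.inr (Or.inl ?_)⟩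
    rw [hdiag, IUmodel.diag_eta, h0, h1]
    have : (-1 : Matrix (Fin 2) (Fin 2) ℂ) = !![-1,0;0,-1] := by
      rw [show (-1 : Matrix (Fin 2) (Fin 2) ℂ) = -(1 : Matrix (Fin 2) (Fin 2) ℂ) from rfl,
        Matrix.one_fin_two]
      norm_num
    rw [this]
    norm_num

/-- Transport of the invariance property along a congruence. -/
private lemma IUmodel.conj_inv (S H E g : Matrix (Fin 2) (Fin 2) ℂ)
    (hS : IsUnit S.det) (hE : Sᴴ * H * S = E) (hg : gᴴ * H * g = H) :
    (S⁻¹ * g * S)ᴴ * E * (S⁻¹ * g * S) = E := by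
  have hSH : IsUnit (Sᴴ).det := by
    rw [Matrix.det_conjTranspose]
    exact hS.star
  calc (S⁻¹ * g * S)ᴴ * E * (S⁻¹ * g * S)
      = Sᴴ * (gᴴ * ((Sᴴ)⁻¹ * (Sᴴ * (H * (S * (S⁻¹ * (g * S))))))) := by
        rw [← hE]
        simp only [Matrix.conjTranspose_mul, Matrix.conjTranspose_nonsing_inv,
          Matrix.mul_assoc]
    _ = Sᴴ * (gᴴ * (H * (g * S))) := by
        rw [Matrix.nonsing_inv_mul_cancel_left _ _ hSH,
          Matrix.mul_nonsing_inv_cancel_left _ _ hS]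
    _ = Sᴴ * (gᴴ * H * g) * S := by simp only [Matrix.mul_assoc]
    _ = E := by rw [hg, hE]

/-- Entries of an element of `SU(1,1)`. -/
private lemma IUmodel.su11_entries (m : Matrix (Fin 2) (Fin 2) ℂ) (hdet : m.det = 1)
    (hm : mᴴ * !![1,0;0,(-1:ℂ)] * m = !![1,0;0,(-1:ℂ)]) :
    m 1 1 = star (m 0 0) ∧ m 1 0 = star (m 0 1) := by
  have hadj : m * m.adjugate = 1 := by rw [Matrix.mul_adjugate, hdet, one_smul]
  have hJJ : !![1,0;0,(-1:ℂ)] * !![1,0;0,(-1:ℂ)] = 1 := by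
    ext i j; fin_cases i <;> fin_cases j <;>
      simp [Matrix.mul_apply, Fin.sum_univ_two]
  have hinv : (!![1,0;0,(-1:ℂ)] * mᴴ * !![1,0;0,(-1:ℂ)]) * m = 1 := by
    calc (!![1,0;0,(-1:ℂ)] * mᴴ * !![1,0;0,(-1:ℂ)]) * m
        = !![1,0;0,(-1:ℂ)] * (mᴴ * !![1,0;0,(-1:ℂ)] * m) := by
          simp only [Matrix.mul_assoc]
      _ = 1 := by rw [hm, hJJ]
  have heq : !![1,0;0,(-1:ℂ)] * mᴴ * !![1,0;0,(-1:ℂ)] = m.adjugate := by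
    calc !![1,0;0,(-1:ℂ)] * mᴴ * !![1,0;0,(-1:ℂ)]
        = !![1,0;0,(-1:ℂ)] * mᴴ * !![1,0;0,(-1:ℂ)] * (m * m.adjugate) := by
          rw [hadj, Matrix.mul_one]
      _ = (!![1,0;0,(-1:ℂ)] * mᴴ * !![1,0;0,(-1:ℂ)] * m) * m.adjugate := by
          simp only [Matrix.mul_assoc]
      _ = m.adjugate := by rw [hinv, Matrix.one_mul]
  rw [Matrix.adjugate_fin_two] at heq
  constructor
  · have h00 := congrFun (congrFun heq 0) 0
    simpa [Matrix.mul_apply, Fin.sum_univ_two, Matrix.conjTranspose_apply,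
      Matrix.vecMul, dotProduct, Matrix.vecHead, Matrix.vecTail] using h00.symm
  · have h01 := congrFun (congrFun heq 0) 1
    simp only [Matrix.mul_apply, Fin.sum_univ_two, Matrix.conjTranspose_apply,
      Matrix.vecMul, dotProduct, Matrix.vecHead, Matrix.vecTail,
      Matrix.cons_val', Matrix.cons_val_zero, Matrix.cons_val_one, Matrix.head_cons,
      Matrix.head_fin_const, Matrix.empty_val', Matrix.cons_val_fin_one, Matrix.of_apply] at h01
    have h2 : star (m 1 0) = m 0 1 := by linear_combination -h01
    rw [← h2, star_star]

private lemma IUmodel.Winv : (!![1,-I;-I,(1:ℂ)])⁻¹ = (2:ℂ)⁻¹ • !![1,I;I,1] := by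
  apply Matrix.inv_eq_right_inv
  ext i j
  fin_cases i <;> fin_cases j <;>
    simp [Matrix.mul_apply, Fin.sum_univ_two, Matrix.smul_apply] <;> ring_nf <;>
    norm_num [Complex.I_sq]

/-- Conjugating an `SU(1,1)`-shaped matrix by the Cayley matrix gives a real matrix. -/
private lemma IUmodel.su11_real (m : Matrix (Fin 2) (Fin 2) ℂ)
    (hd : m 1 1 = star (m 0 0)) (hc : m 1 0 = star (m 0 1)) :
    ∀ i j, (((2:ℂ)⁻¹ • !![1,I;I,1] * m * !![1,-I;-I,(1:ℂ)]) i j).im = 0 := by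
  have hm2 := Matrix.eta_fin_two m
  rw [hd, hc] at hm2
  intro i j
  rw [← Complex.conj_eq_iff_im, hm2]
  fin_cases i <;> fin_cases j <;>
  · simp only [Matrix.mul_apply, Fin.sum_univ_two, Matrix.smul_apply,
      Matrix.cons_val', Matrix.cons_val_zero, Matrix.cons_val_one, Matrix.head_cons,
      Matrix.empty_val', Matrix.cons_val_fin_one, Matrix.of_apply, Matrix.head_fin_const,
      smul_eq_mul, Fin.mk_zero, Fin.mk_one, Fin.isValue]
    simp only [map_add, _root_.map_mul, map_inv₀, Complex.conj_I, map_ofNat, _root_.map_one,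
      Complex.star_def, Complex.conj_conj, map_neg]
    ring_nf
    simp only [Complex.I_sq]
    ring

/-- A real 2×2 matrix of determinant one preserves the Hermitian form `!![0,I;-I,0]`. -/
private lemma IUmodel.real_sp (m : Matrix (Fin 2) (Fin 2) ℂ) (hdet : m.det = 1)
    (hre : ∀ i j, (m i j).im = 0) :
    mᴴ * !![0,I;-I,0] * m = !![0,I;-I,(0:ℂ)] := by
  obtain ⟨a,b,c,d,hm⟩ : ∃ a b c d, m = !![a,b;c,d] := ⟨_,_,_,_, Matrix.eta_fin_two m⟩
  subst hm
  have ha : star a = a := Complex.conj_eq_iff_im.2 (by simpa using hre 0 0)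
  have hb : star b = b := Complex.conj_eq_iff_im.2 (by simpa using hre 0 1)
  have hc : star c = c := Complex.conj_eq_iff_im.2 (by simpa using hre 1 0)
  have hd : star d = d := Complex.conj_eq_iff_im.2 (by simpa using hre 1 1)
  rw [Matrix.det_fin_two_of] at hdet
  ext i j
  fin_cases i <;> fin_cases j <;>
  · simp only [Matrix.mul_apply, Fin.sum_univ_two, Matrix.conjTranspose_apply,
      Matrix.cons_val', Matrix.cons_val_zero, Matrix.cons_val_one, Matrix.head_cons,
      Matrix.empty_val', Matrix.cons_val_fin_one, Matrix.of_apply, Matrix.head_fin_const,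
      Fin.mk_zero, Fin.mk_one, Fin.isValue, ha, hb, hc, hd]
    first
      | ring1
      | linear_combination (Complex.I) * hdet
      | linear_combination (-Complex.I) * hdet

/-- A subgroup of `SL(2,ℂ)`, viewed as a set of matrices, is *unitary* if it preserves some
nondegenerate Hermitian form `H` under `g ↦ gᴴ H g`. -/
def IsUnitarySubgroup (G : Subgroup (Matrix.SpecialLinearGroup (Fin 2) ℂ)) : Prop :=
  ∃ H : Matrix (Fin 2) (Fin 2) ℂ, H.IsHermitian ∧ H.det ≠ 0 ∧
    ∀ g ∈ G, (g : Matrix (Fin 2) (Fin 2) ℂ)ᴴ * H * (g : Matrix (Fin 2) (Fin 2) ℂ) = H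

/-- The natural action of `G ⊆ SL(2,ℂ)` on `ℂ²` is irreducible if there is no nonzero common
eigenvector. -/
def IsIrreducibleSubgroup (G : Subgroup (Matrix.SpecialLinearGroup (Fin 2) ℂ)) : Prop :=
  ¬ ∃ v : Fin 2 → ℂ, v ≠ 0 ∧ ∀ g ∈ G, ∃ c : ℂ, (g : Matrix (Fin 2) (Fin 2) ℂ) *ᵥ v = c • v

/-- An irreducible subgroup of `SL(2,ℂ)` is unitary iff it is conjugate to a subgroup of
`SL(2,ℝ)` or to a subgroup of `SU(2)`. -/
theorem irreducible_unitary_iff_conj_model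
    (G : Subgroup (Matrix.SpecialLinearGroup (Fin 2) ℂ))
    (hirr : IsIrreducibleSubgroup G) :
    IsUnitarySubgroup G ↔
      ∃ T : Matrix (Fin 2) (Fin 2) ℂ, IsUnit T.det ∧
        ((∀ g ∈ G, ∀ i j, ((T⁻¹ * (g : Matrix (Fin 2) (Fin 2) ℂ) * T) i j).im = 0) ∨
         (∀ g ∈ G,
            (T⁻¹ * (g : Matrix (Fin 2) (Fin 2) ℂ) * T)ᴴ *
              (T⁻¹ * (g : Matrix (Fin 2) (Fin 2) ℂ) * T) = 1)) := by
  constructor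
  · rintro ⟨H, hherm, hdet, hGinv⟩
    obtain ⟨S, hS, hE⟩ := IUmodel.herm_congr_models H hherm hdet
    have hdm : ∀ g : Matrix.SpecialLinearGroup (Fin 2) ℂ,
        (S⁻¹ * (g : Matrix (Fin 2) (Fin 2) ℂ) * S).det = 1 := by
      intro g
      rw [Matrix.det_conj' ((Matrix.isUnit_iff_isUnit_det _).mpr hS)]
      exact g.prop
    rcases hE with hE | hE | hE
    · -- model 1 : SU(2) branch
      refine ⟨S, hS, Or.inr ?_⟩
      intro g hg
      have := IUmodel.conj_inv S H 1 g hS hE (hGinv g hg)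
      simpa [Matrix.mul_one] using this
    · -- model -1 : SU(2) branch
      refine ⟨S, hS, Or.inr ?_⟩
      intro g hg
      have h2 := IUmodel.conj_inv S H (-1) g hS hE (hGinv g hg)
      rw [Matrix.mul_neg, Matrix.mul_one, Matrix.neg_mul] at h2
      exact neg_inj.mp h2
    · -- model diag(1,-1) : real branch
      refine ⟨S * !![1,-I;-I,(1:ℂ)], ?_, Or.inl ?_⟩
      · rw [Matrix.det_mul]
        refine hS.mul (isUnit_iff_ne_zero.2 ?_)
        rw [Matrix.det_fin_two_of]
        simp [Complex.I_mul_I]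
      · intro g hg i j
        have hJinv := IUmodel.conj_inv S H !![1,0;0,(-1:ℂ)] g hS hE (hGinv g hg)
        obtain ⟨hd, hc⟩ :=
          IUmodel.su11_entries (S⁻¹ * (g : Matrix (Fin 2) (Fin 2) ℂ) * S) (hdm g) hJinv
        have hreal := IUmodel.su11_real (S⁻¹ * (g : Matrix (Fin 2) (Fin 2) ℂ) * S) hd hc i j
        have hrw : (S * !![1,-I;-I,(1:ℂ)])⁻¹ * (g : Matrix (Fin 2) (Fin 2) ℂ)
              * (S * !![1,-I;-I,(1:ℂ)])
            = (2:ℂ)⁻¹ • !![1,I;I,1] * (S⁻¹ * (g : Matrix (Fin 2) (Fin 2) ℂ) * S)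
              * !![1,-I;-I,(1:ℂ)] := by
          rw [Matrix.mul_inv_rev, IUmodel.Winv]
          simp only [Matrix.mul_assoc, Matrix.smul_mul, Matrix.mul_smul]
        rw [hrw]
        exact hreal
  · rintro ⟨T, hT, hcase⟩
    have hTinv : T * T⁻¹ = 1 := Matrix.mul_nonsing_inv T hT
    have hmT : ∀ g : Matrix.SpecialLinearGroup (Fin 2) ℂ,
        T⁻¹ * (g : Matrix (Fin 2) (Fin 2) ℂ)
          = (T⁻¹ * (g : Matrix (Fin 2) (Fin 2) ℂ) * T) * T⁻¹ := by
      intro g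
      calc T⁻¹ * (g : Matrix (Fin 2) (Fin 2) ℂ)
          = T⁻¹ * (g : Matrix (Fin 2) (Fin 2) ℂ) * (T * T⁻¹) := by
            rw [hTinv, Matrix.mul_one]
        _ = (T⁻¹ * (g : Matrix (Fin 2) (Fin 2) ℂ) * T) * T⁻¹ := by
            simp only [Matrix.mul_assoc]
    have hdetTinv : IsUnit (T⁻¹).det := T.isUnit_nonsing_inv_det hT
    have hdm : ∀ g : Matrix.SpecialLinearGroup (Fin 2) ℂ,
        (T⁻¹ * (g : Matrix (Fin 2) (Fin 2) ℂ) * T).det = 1 := by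
      intro g
      rw [Matrix.det_conj' ((Matrix.isUnit_iff_isUnit_det _).mpr hT)]
      exact g.prop
    rcases hcase with hre | hsu
    · -- real model
      refine ⟨(T⁻¹)ᴴ * !![0,I;-I,(0:ℂ)] * T⁻¹, ?_, ?_, ?_⟩
      · show ((T⁻¹)ᴴ * !![0,I;-I,(0:ℂ)] * T⁻¹)ᴴ = (T⁻¹)ᴴ * !![0,I;-I,(0:ℂ)] * T⁻¹
        have hK : (!![0,I;-I,(0:ℂ)])ᴴ = !![0,I;-I,(0:ℂ)] := by
          ext i j
          fin_cases i <;> fin_cases j <;> simp [Matrix.conjTranspose_apply]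
        calc ((T⁻¹)ᴴ * !![0,I;-I,(0:ℂ)] * T⁻¹)ᴴ
            = (T⁻¹)ᴴ * (!![0,I;-I,(0:ℂ)])ᴴ * ((T⁻¹)ᴴ)ᴴ := by
              simp only [Matrix.conjTranspose_mul, Matrix.mul_assoc]
          _ = (T⁻¹)ᴴ * !![0,I;-I,(0:ℂ)] * T⁻¹ := by
              rw [hK, Matrix.conjTranspose_conjTranspose]
      · have hKdet : (!![0,I;-I,(0:ℂ)]).det = -1 := by
          rw [Matrix.det_fin_two_of]
          simp [Complex.I_mul_I]
        rw [Matrix.det_mul, Matrix.det_mul, Matrix.det_conjTranspose, hKdet]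
        have h1 : (T⁻¹).det ≠ 0 := hdetTinv.ne_zero
        have h2 : star ((T⁻¹).det) ≠ 0 := fun hh => h1 (star_eq_zero.mp hh)
        exact mul_ne_zero (mul_ne_zero h2 (by norm_num)) h1
      · intro g hg
        set m : Matrix (Fin 2) (Fin 2) ℂ := T⁻¹ * (g : Matrix (Fin 2) (Fin 2) ℂ) * T with hmdef
        have hsp : mᴴ * !![0,I;-I,(0:ℂ)] * m = !![0,I;-I,(0:ℂ)] :=
          IUmodel.real_sp m (by rw [hmdef]; exact hdm g) (by rw [hmdef]; exact hre g hg)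
        have hgT : T⁻¹ * (g : Matrix (Fin 2) (Fin 2) ℂ) = m * T⁻¹ := by
          rw [hmdef]; exact hmT g
        calc (g : Matrix (Fin 2) (Fin 2) ℂ)ᴴ * ((T⁻¹)ᴴ * !![0,I;-I,(0:ℂ)] * T⁻¹)
              * (g : Matrix (Fin 2) (Fin 2) ℂ)
            = (T⁻¹ * (g : Matrix (Fin 2) (Fin 2) ℂ))ᴴ * !![0,I;-I,(0:ℂ)]
              * (T⁻¹ * (g : Matrix (Fin 2) (Fin 2) ℂ)) := by
              simp only [Matrix.conjTranspose_mul, Matrix.mul_assoc]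
          _ = (m * T⁻¹)ᴴ * !![0,I;-I,(0:ℂ)] * (m * T⁻¹) := by rw [hgT]
          _ = (T⁻¹)ᴴ * (mᴴ * !![0,I;-I,(0:ℂ)] * m) * T⁻¹ := by
              simp only [Matrix.conjTranspose_mul, Matrix.mul_assoc]
          _ = (T⁻¹)ᴴ * !![0,I;-I,(0:ℂ)] * T⁻¹ := by rw [hsp]
    · -- SU(2) model
      refine ⟨(T⁻¹)ᴴ * T⁻¹, ?_, ?_, ?_⟩
      · show ((T⁻¹)ᴴ * T⁻¹)ᴴ = (T⁻¹)ᴴ * T⁻¹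
        rw [Matrix.conjTranspose_mul, Matrix.conjTranspose_conjTranspose]
      · rw [Matrix.det_mul, Matrix.det_conjTranspose]
        intro h
        rcases mul_eq_zero.mp h with h1 | h1
        · exact hdetTinv.ne_zero (by simpa using star_eq_zero.mp h1)
        · exact hdetTinv.ne_zero h1
      · intro g hg
        set m : Matrix (Fin 2) (Fin 2) ℂ := T⁻¹ * (g : Matrix (Fin 2) (Fin 2) ℂ) * T with hmdef
        have hsp : mᴴ * m = 1 := by rw [hmdef]; exact hsu g hg
        have hgT : T⁻¹ * (g : Matrix (Fin 2) (Fin 2) ℂ) = m * T⁻¹ := by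
          rw [hmdef]; exact hmT g
        calc (g : Matrix (Fin 2) (Fin 2) ℂ)ᴴ * ((T⁻¹)ᴴ * T⁻¹)
              * (g : Matrix (Fin 2) (Fin 2) ℂ)
            = (T⁻¹ * (g : Matrix (Fin 2) (Fin 2) ℂ))ᴴ
              * (T⁻¹ * (g : Matrix (Fin 2) (Fin 2) ℂ)) := by
              simp only [Matrix.conjTranspose_mul, Matrix.mul_assoc]
          _ = (m * T⁻¹)ᴴ * (m * T⁻¹) := by rw [hgT]
          _ = (T⁻¹)ᴴ * (mᴴ * m) * T⁻¹ := by
              simp only [Matrix.conjTranspose_mul, Matrix.mul_assoc]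
          _ = (T⁻¹)ᴴ * T⁻¹ := by
              rw [hsp, Matrix.mul_one]
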